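/- arXiv:2511.21534 — 2 statements merged into one kernel-verified Lean document; each statement's English description precedes it below -/
import Mathlib

section
/- First part of the Corollary to Theorem 2: if the marginal distribution of G is equal between the two populations, i.e. P(G=g|S=1) = P(G=g|S=2) for all g ∈ {0,…,g_max}, then φ₁ − φ₂ = Σ_{g=0}^{g_max} Cov( τ(g), υ(g) ), where υ(g) := P(G=g|S=1,𝓗) − P(G=g|S=2,𝓗) and the covariance is unconditional. -/
open MeasureTheory ProbabilityTheory Set

/-- The indicator function of a set, as a real-valued random variable. -/
noncomputable def ind {Ω : Type*} (s : Set Ω) : Ω → ℝ := s.indicator fun _ => 1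

/-- The covariance of two real random variables, `Cov(f,g) = E[f·g] − E[f]·E[g]`. -/
noncomputable def cov {Ω : Type*} {m : MeasurableSpace Ω} (μ : MeasureTheory.Measure Ω)
    (f g : Ω → ℝ) : ℝ :=
  (∫ ω, f ω * g ω ∂μ) - (∫ ω, f ω ∂μ) * ∫ ω, g ω ∂μ

lemma ind_of_mem {Ω : Type*} {s : Set Ω} {ω : Ω} (h : ω ∈ s) : ind s ω = 1 :=
  Set.indicator_of_mem h _

lemma ind_of_not_mem {Ω : Type*} {s : Set Ω} {ω : Ω} (h : ω ∉ s) : ind s ω = 0 :=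
  Set.indicator_of_notMem h _

lemma ind_mul_eq_inter {Ω : Type*} (s t : Set Ω) (ω : Ω) :
    ind s ω * ind t ω = ind (s ∩ t) ω := by
  by_cases hs : ω ∈ s <;> by_cases ht : ω ∈ t
  · rw [ind_of_mem hs, ind_of_mem ht, ind_of_mem (Set.mem_inter hs ht)]; ring
  · rw [ind_of_not_mem ht, ind_of_not_mem (fun h : ω ∈ s ∩ t => ht h.2)]; ring
  · rw [ind_of_not_mem hs, ind_of_not_mem (fun h : ω ∈ s ∩ t => hs h.1)]; ring
  · rw [ind_of_not_mem hs, ind_of_not_mem (fun h : ω ∈ s ∩ t => hs h.1)]; ring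

lemma ind_nonneg {Ω : Type*} (s : Set Ω) (ω : Ω) : 0 ≤ ind s ω := by
  by_cases h : ω ∈ s <;> simp [ind_of_mem, ind_of_not_mem, h]

lemma ind_le_one {Ω : Type*} (s : Set Ω) (ω : Ω) : ind s ω ≤ 1 := by
  by_cases h : ω ∈ s <;> simp [ind_of_mem, ind_of_not_mem, h]

lemma norm_ind_le_one {Ω : Type*} (s : Set Ω) (ω : Ω) : ‖ind s ω‖ ≤ 1 := by
  rw [Real.norm_eq_abs, abs_le]
  exact ⟨by nlinarith [ind_nonneg s ω], ind_le_one s ω⟩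

lemma ind_integrable {Ω : Type*} {mΩ : MeasurableSpace Ω} (μ : Measure Ω) [IsFiniteMeasure μ]
    {s : Set Ω} (hs : MeasurableSet s) : Integrable (ind s) μ :=
  (integrable_const (1:ℝ)).indicator hs

lemma ind_stronglyMeasurable {Ω : Type*} {mΩ : MeasurableSpace Ω}
    {s : Set Ω} (hs : MeasurableSet s) : StronglyMeasurable (ind s) :=
  (stronglyMeasurable_const.indicator hs)

lemma indep_mono {Ω : Type*} {mΩ : MeasurableSpace Ω} {μ : Measure Ω}
    {m₁ m₂ m₁' m₂' : MeasurableSpace Ω}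
    (h : Indep m₁ m₂ μ) (h1 : m₁' ≤ m₁) (h2 : m₂' ≤ m₂) : Indep m₁' m₂' μ := by
  rw [Indep_iff] at h ⊢
  exact fun t1 t2 ht1 ht2 => h t1 t2 (h1 _ ht1) (h2 _ ht2)

lemma integral_cond_eq {Ω : Type*} {mΩ : MeasurableSpace Ω} (μ : Measure Ω)
    {A : Set Ω} (hA : MeasurableSet A) (f : Ω → ℝ) :
    ∫ ω, f ω ∂(μ[|A]) = (μ A).toReal⁻¹ * ∫ ω, ind A ω * f ω ∂μ := by
  have h1 : ∀ ω, A.indicator f ω = ind A ω * f ω := by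
    intro ω; by_cases h : ω ∈ A <;> simp [ind_of_mem, ind_of_not_mem, h]
  rw [ProbabilityTheory.cond, integral_smul_measure, ← integral_indicator hA,
    ENNReal.toReal_inv, smul_eq_mul]
  congr 1
  exact integral_congr_ae (Filter.Eventually.of_forall h1)

lemma integral_cond_of_mH_measurable {Ω : Type*} [mΩ : MeasurableSpace Ω] (μ : Measure Ω)
    [IsProbabilityMeasure μ] {mH : MeasurableSpace Ω} (hH : mH ≤ mΩ)
    {S : Ω → ℕ} (hSmeas : Measurable[mΩ] S)
    (hSH : Indep (MeasurableSpace.comap S inferInstance) mH μ)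
    (s : ℕ) (hs : μ {ω | S ω = s} ≠ 0)
    {X : Ω → ℝ} (hX : Measurable[mH] X) {C : ℝ} (hXb : ∀ᵐ ω ∂μ, ‖X ω‖ ≤ C) :
    ∫ ω, X ω ∂(μ[|{ω | S ω = s}]) = ∫ ω, X ω ∂μ := by
  letI : MeasurableSpace Ω := mΩ
  set A : Set Ω := {ω | S ω = s} with hAdef
  have hA : MeasurableSet[mΩ] A := hSmeas (measurableSet_singleton s)
  have hXm : Measurable[mΩ] X := hX.mono hH le_rfl
  have hXint : Integrable X μ :=
    (integrable_const C).mono' hXm.aestronglyMeasurable hXb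
  have hφ : Measurable[MeasurableSpace.comap S inferInstance] (ind A) := by
    have h1 : ind A = (fun n : ℕ => if n = s then (1:ℝ) else 0) ∘ S := by
      funext ω
      by_cases h : S ω = s
      · simp [ind_of_mem (show ω ∈ A from h), Function.comp, h]
      · simp [ind_of_not_mem (show ω ∉ A from h), Function.comp, h]
    rw [h1]
    exact (measurable_from_top).comp (measurable_iff_comap_le.mpr le_rfl)
  have hindep : IndepFun (ind A) X μ := by
    rw [IndepFun_iff_Indep]
    exact indep_mono hSH (measurable_iff_comap_le.mp hφ) (measurable_iff_comap_le.mp hX)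
  have hmul : ∫ ω, ind A ω * X ω ∂μ = (μ A).toReal * ∫ ω, X ω ∂μ := by
    rw [show ∫ ω, ind A ω * X ω ∂μ = (∫ ω, ind A ω ∂μ) * ∫ ω, X ω ∂μ from
      hindep.integral_mul_eq_mul_integral ((ind_stronglyMeasurable hA).aestronglyMeasurable)
      hXm.aestronglyMeasurable]
    congr 1
    rw [show (ind A) = A.indicator (fun _ => (1:ℝ)) from rfl, integral_indicator hA]
    simp [Measure.real]
  rw [integral_cond_eq μ hA, hmul, ← mul_assoc]
  have hfin : μ A ≠ ⊤ := measure_ne_top μ A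
  rw [inv_mul_cancel₀ (by simp [ENNReal.toReal_ne_zero, hs, hfin]), one_mul]

lemma integral_ind_eq_toReal {Ω : Type*} [mΩ : MeasurableSpace Ω] (μ : Measure Ω)
    {E : Set Ω} (hE : MeasurableSet[mΩ] E) : ∫ ω, ind E ω ∂μ = (μ E).toReal := by
  rw [show (ind E) = E.indicator (fun _ => (1:ℝ)) from rfl, integral_indicator hE]
  simp [Measure.real]

lemma mul_condexp_integral_eq {Ω : Type*} [mΩ : MeasurableSpace Ω] (μ : Measure Ω)
    [IsProbabilityMeasure μ] {mH : MeasurableSpace Ω} (hH : mH ≤ mΩ)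
    {p : Ω → ℝ} (hpsm : StronglyMeasurable[mH] p) (hpnorm : ∀ᵐ ω ∂μ, ‖p ω‖ ≤ 1)
    {E : Set Ω} (hE : MeasurableSet[mΩ] E) :
    ∫ ω, (μ[ind E|mH]) ω * p ω ∂μ = ∫ ω, p ω * ind E ω ∂μ := by
  letI : MeasurableSpace Ω := mΩ
  haveI : SigmaFinite (μ.trim hH) := inferInstance
  have hintE : Integrable (ind E) μ := ind_integrable μ hE
  have hpE_int : Integrable (p * ind E) μ :=
    Integrable.bdd_mul hintE ((hpsm.mono hH).aestronglyMeasurable) hpnorm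
  have hmul := condExp_mul_of_stronglyMeasurable_left hpsm hpE_int hintE
  calc ∫ ω, (μ[ind E|mH]) ω * p ω ∂μ
      = ∫ ω, (p * μ[ind E|mH]) ω ∂μ := by
        refine integral_congr_ae (Filter.Eventually.of_forall fun ω => ?_)
        simp [Pi.mul_apply, mul_comm]
    _ = ∫ ω, (μ[p * ind E|mH]) ω ∂μ := (integral_congr_ae hmul).symm
    _ = ∫ ω, (p * ind E) ω ∂μ := integral_condExp hH
    _ = ∫ ω, p ω * ind E ω ∂μ := rfl

lemma condIndep_integral_mul_ind {Ω γ : Type*} [mΩ : MeasurableSpace Ω] [StandardBorelSpace Ω]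
    {mγ : MeasurableSpace γ} (μ : Measure Ω) [IsProbabilityMeasure μ]
    {mH : MeasurableSpace Ω} (hH : mH ≤ mΩ)
    {f : Ω → ℝ} (hf : Measurable[mΩ] f) {g : Ω → γ} (hg : Measurable[mΩ] g)
    (hci : CondIndepFun mH hH f g μ) {t : Set γ} (ht : MeasurableSet[mγ] t) :
    ∫ ω, f ω * ind (g ⁻¹' t) ω ∂μ = ∫ ω, f ω * (μ[ind (g ⁻¹' t) | mH]) ω ∂μ := by
  letI : MeasurableSpace Ω := mΩ
  haveI : SigmaFinite (μ.trim hH) := inferInstance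
  set F := g ⁻¹' t with hFdef
  have hF : MeasurableSet[mΩ] F := hg ht
  set p := μ[ind F | mH] with hpdef
  have hpsm : StronglyMeasurable[mH] p := stronglyMeasurable_condExp
  have hpm : Measurable[mΩ] p := (hpsm.mono hH).measurable
  have hp0 : 0 ≤ᵐ[μ] p :=
    condExp_nonneg (Filter.Eventually.of_forall (ind_nonneg F))
  have hp1 : p ≤ᵐ[μ] fun _ => (1:ℝ) := by
    have h := condExp_mono (μ := μ) (m := mH) (ind_integrable μ hF) (integrable_const (1:ℝ))
      (Filter.Eventually.of_forall (fun ω => ind_le_one F ω))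
    rw [condExp_const hH (1:ℝ)] at h
    exact h
  have hpnorm : ∀ᵐ ω ∂μ, ‖p ω‖ ≤ 1 := by
    filter_upwards [hp0, hp1] with ω h0 h1
    rw [Real.norm_eq_abs, abs_le]
    exact ⟨le_trans (by norm_num) (show (0:ℝ) ≤ p ω from h0), h1⟩
  have hfac := (condIndepFun_iff_condExp_inter_preimage_eq_mul (μ := μ) hf hg).mp hci
  have hkey : ∀ s : Set ℝ, MeasurableSet s →
      (μ.restrict F) (f ⁻¹' s) = (μ.withDensity (fun ω => ENNReal.ofReal (p ω))) (f ⁻¹' s) := by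
    intro s hs
    have hEm : MeasurableSet[mΩ] (f ⁻¹' s) := hf hs
    have h1 : μ[ind (f ⁻¹' s ∩ F)|mH] =ᵐ[μ]
        fun ω => (μ[ind (f ⁻¹' s)|mH]) ω * p ω := hfac s t hs ht
    have hreal : (μ (f ⁻¹' s ∩ F)).toReal = ∫ ω in f ⁻¹' s, p ω ∂μ := by
      calc (μ (f ⁻¹' s ∩ F)).toReal
          = ∫ ω, ind (f ⁻¹' s ∩ F) ω ∂μ := (integral_ind_eq_toReal μ (hEm.inter hF)).symm
        _ = ∫ ω, (μ[ind (f ⁻¹' s ∩ F)|mH]) ω ∂μ := (integral_condExp hH).symm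
        _ = ∫ ω, (μ[ind (f ⁻¹' s)|mH]) ω * p ω ∂μ := integral_congr_ae h1
        _ = ∫ ω, p ω * ind (f ⁻¹' s) ω ∂μ :=
            mul_condexp_integral_eq μ hH hpsm hpnorm hEm
        _ = ∫ ω in f ⁻¹' s, p ω ∂μ := by
            rw [← integral_indicator hEm]
            refine integral_congr_ae (Filter.Eventually.of_forall fun ω => ?_)
            by_cases h : ω ∈ f ⁻¹' s
            · simp [ind_of_mem h, Set.indicator_of_mem h]
            · simp [ind_of_not_mem h, Set.indicator_of_notMem h]
    have hnn : 0 ≤ᵐ[μ.restrict (f ⁻¹' s)] p := ae_restrict_of_ae hp0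
    have hpint : Integrable p (μ.restrict (f ⁻¹' s)) := integrable_condExp.integrableOn
    rw [Measure.restrict_apply hEm, withDensity_apply _ hEm,
      ← ofReal_integral_eq_lintegral_ofReal hpint hnn, ← hreal,
      ENNReal.ofReal_toReal (measure_ne_top μ _)]
  have hmf : MeasurableSpace.comap f Real.measurableSpace ≤ mΩ := measurable_iff_comap_le.mp hf
  have hfsm : StronglyMeasurable[MeasurableSpace.comap f Real.measurableSpace] f :=
    (measurable_iff_comap_le.mpr le_rfl).stronglyMeasurable
  have htrim : (μ.restrict F).trim hmf
      = (μ.withDensity (fun ω => ENNReal.ofReal (p ω))).trim hmf := by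
    letI : MeasurableSpace Ω := MeasurableSpace.comap f Real.measurableSpace
    refine Measure.ext fun E hE => ?_
    have e1 : (μ.restrict F).trim hmf E = (μ.restrict F) E := trim_measurableSet_eq hmf hE
    have e2 : (μ.withDensity (fun ω => ENNReal.ofReal (p ω))).trim hmf E
        = (μ.withDensity (fun ω => ENNReal.ofReal (p ω))) E := trim_measurableSet_eq hmf hE
    rw [e1, e2]
    obtain ⟨s, hs, rfl⟩ := hE
    exact hkey s hs
  have hfun1 : (fun ω => f ω * ind F ω) = F.indicator f := by
    funext ω
    by_cases h : ω ∈ F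
    · simp [ind_of_mem h, Set.indicator_of_mem h]
    · simp [ind_of_not_mem h, Set.indicator_of_notMem h]
  calc ∫ ω, f ω * ind F ω ∂μ
      = ∫ ω, f ω ∂(μ.restrict F) := by rw [hfun1, integral_indicator hF]
    _ = ∫ ω, f ω ∂((μ.restrict F).trim hmf) := integral_trim hmf hfsm
    _ = ∫ ω, f ω ∂((μ.withDensity (fun ω => ENNReal.ofReal (p ω))).trim hmf) := by rw [htrim]
    _ = ∫ ω, f ω ∂(μ.withDensity (fun ω => ENNReal.ofReal (p ω))) := (integral_trim hmf hfsm).symm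
    _ = ∫ ω, f ω * p ω ∂μ := by
        rw [show (fun ω => ENNReal.ofReal (p ω)) = (fun ω => ((p ω).toNNReal : ENNReal))
            from rfl,
          integral_withDensity_eq_integral_smul hpm.real_toNNReal f]
        refine integral_congr_ae ?_
        filter_upwards [hp0] with ω h0
        simp [NNReal.smul_def, Real.coe_toNNReal _ h0, mul_comm]

lemma setIntegral_eq_ind_mul {Ω : Type*} [mΩ : MeasurableSpace Ω] (μ : Measure Ω)
    {H : Set Ω} (hHm : MeasurableSet[mΩ] H) (f : Ω → ℝ) :
    ∫ x in H, f x ∂μ = ∫ ω, ind H ω * f ω ∂μ := by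
  rw [← integral_indicator hHm]
  refine integral_congr_ae (Filter.Eventually.of_forall fun ω => ?_)
  by_cases h : ω ∈ H
  · simp [ind_of_mem h, Set.indicator_of_mem h]
  · simp [ind_of_not_mem h, Set.indicator_of_notMem h]

/-- **Corollary to Theorem 2, first part.**  If the marginal distribution of `G` is equal
between the two populations, i.e. `P(G=g|S=1) = P(G=g|S=2)` for all `g ∈ {0,…,g_max}`, then
`φ₁ − φ₂ = Σ_g Cov(τ(g), υ(g))`, where `υ(g) = P(G=g|S=1,𝓗) − P(G=g|S=2,𝓗)` and the
covariance is unconditional. -/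
theorem transport_bias_equal_marginals
    {Ω : Type*} [mΩ : MeasurableSpace Ω] [StandardBorelSpace Ω] [Nonempty Ω]
    (μ : Measure Ω) [IsProbabilityMeasure μ]
    (gmax : ℕ)
    (S A G : Ω → ℕ)
    (hS : ∀ ω, S ω = 1 ∨ S ω = 2) (hSmeas : Measurable S)
    (hSpos : ∀ s, (s = 1 ∨ s = 2) → 0 < μ {ω | S ω = s})
    (hA : ∀ ω, A ω ≤ 1) (hG : ∀ ω, G ω ≤ gmax)
    (hAmeas : Measurable A) (hGmeas : Measurable G)
    (Ypo : ℕ → ℕ → Ω → ℝ)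
    (hYpomeas : ∀ a ≤ 1, ∀ g ≤ gmax, Measurable (Ypo a g))
    (hYposq : ∀ a ≤ 1, ∀ g ≤ gmax, MemLp (Ypo a g) 2 μ)
    (Ya : ℕ → Ω → ℝ)
    (hYa : ∀ a ω, Ya a ω = ∑ g ∈ Finset.range (gmax + 1), ind {ω' | G ω' = g} ω * Ypo a g ω)
    (Y : Ω → ℝ)
    (hY : ∀ ω, Y ω = ind {ω' | A ω' = 1} ω * Ya 1 ω + ind {ω' | A ω' = 0} ω * Ya 0 ω)
    (mH : MeasurableSpace Ω) (hH : mH ≤ mΩ)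
    (pg : ℕ → ℕ → Ω → ℝ)
    (hpg : ∀ s g, pg s g = (μ[|{ω | S ω = s}])[ind {ω | G ω = g} | mH])
    (hpgbdd : ∀ s g, ∀ᵐ ω ∂μ, 0 ≤ pg s g ω ∧ pg s g ω ≤ 1)
    (hpgmeas : ∀ s g, Measurable[mH] (pg s g))
    (htrans : ∀ a ≤ 1, ∀ g ≤ gmax,
      CondIndepFun mH hH (Ypo a g) (fun ω => (S ω, G ω)) μ)
    (hSH : Indep (MeasurableSpace.comap S inferInstance) mH μ)
    (hmarg : ∀ g ≤ gmax,
      (μ[|{ω | S ω = 1}]) {ω | G ω = g} = (μ[|{ω | S ω = 2}]) {ω | G ω = g}) :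
    (∫ ω, (Ya 1 ω - Ya 0 ω) ∂(μ[|{ω | S ω = 1}]))
        - ∫ ω, (Ya 1 ω - Ya 0 ω) ∂(μ[|{ω | S ω = 2}])
      = ∑ g ∈ Finset.range (gmax + 1),
          cov μ (fun ω => Ypo 1 g ω - Ypo 0 g ω) (fun ω => pg 1 g ω - pg 2 g ω) := by
  letI : MeasurableSpace Ω := mΩ
  haveI : SigmaFinite (μ.trim hH) := inferInstance
  have hGset : ∀ g : ℕ, MeasurableSet[mΩ] {ω | G ω = g} :=
    fun g => hGmeas (measurableSet_singleton g)
  have hSset : ∀ s : ℕ, MeasurableSet[mΩ] {ω | S ω = s} :=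
    fun s => hSmeas (measurableSet_singleton s)
  have hμs_ne : ∀ s, (s = 1 ∨ s = 2) → μ {ω | S ω = s} ≠ 0 := fun s hs => (hSpos s hs).ne'
  have hc_ne : ∀ s, (s = 1 ∨ s = 2) → (μ {ω | S ω = s}).toReal ≠ 0 := by
    intro s hs
    simp [ENNReal.toReal_ne_zero, hμs_ne s hs, measure_ne_top]
  have hpairm : Measurable[mΩ] (fun ω => (S ω, G ω)) := hSmeas.prodMk hGmeas
  have hFeq : ∀ s g : ℕ, (fun ω => (S ω, G ω)) ⁻¹' {(s, g)}
      = {ω | S ω = s} ∩ {ω' | G ω' = g} := by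
    intro s g
    ext ω
    simp [Prod.ext_iff]
  have hFmeas : ∀ s g : ℕ, MeasurableSet[mΩ] ((fun ω => (S ω, G ω)) ⁻¹' {(s, g)}) :=
    fun s g => hpairm (measurableSet_singleton _)
  have hint : ∀ a ≤ 1, ∀ g ≤ gmax, Integrable (Ypo a g) μ :=
    fun a ha g hg => (hYposq a ha g hg).integrable one_le_two
  have hpgmeasΩ : ∀ s g, Measurable[mΩ] (pg s g) := fun s g => (hpgmeas s g).mono hH le_rfl
  have hpgnorm : ∀ s g, ∀ᵐ ω ∂μ, ‖pg s g ω‖ ≤ 1 := by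
    intro s g
    filter_upwards [hpgbdd s g] with ω h
    rw [Real.norm_eq_abs, abs_le]
    exact ⟨by linarith [h.1], h.2⟩
  have hpgint : ∀ s g, Integrable (pg s g) μ := fun s g =>
    (integrable_const (1:ℝ)).mono' (hpgmeasΩ s g).aestronglyMeasurable (hpgnorm s g)
  have hprod_int : ∀ a ≤ 1, ∀ g ≤ gmax, ∀ s,
      Integrable (fun ω => Ypo a g ω * pg s g ω) μ := by
    intro a ha g hg s
    refine (Integrable.bdd_mul (hint a ha g hg)
      (hpgmeasΩ s g).aestronglyMeasurable (hpgnorm s g)).congr ?_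
    exact Filter.Eventually.of_forall fun ω => mul_comm _ _
  -- mean of pg
  have hpgmean : ∀ s, (s = 1 ∨ s = 2) → ∀ g,
      ∫ ω, pg s g ω ∂μ = ((μ[|{ω | S ω = s}]) {ω | G ω = g}).toReal := by
    intro s hs g
    haveI : IsProbabilityMeasure (μ[|{ω | S ω = s}]) :=
      cond_isProbabilityMeasure (hμs_ne s hs)
    haveI : SigmaFinite ((μ[|{ω | S ω = s}]).trim hH) := inferInstance
    rw [← integral_cond_of_mH_measurable μ hH hSmeas hSH s (hμs_ne s hs)
      (hpgmeas s g) (hpgnorm s g), hpg s g, integral_condExp hH]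
    exact integral_ind_eq_toReal _ (hGset g)
  -- identification of the conditional probability
  have lemC : ∀ s, (s = 1 ∨ s = 2) → ∀ g : ℕ,
      (fun ω => (μ {ω' | S ω' = s}).toReal * pg s g ω)
        =ᵐ[μ] μ[ind ((fun ω => (S ω, G ω)) ⁻¹' {(s, g)}) | mH] := by
    intro s hs g
    haveI : IsProbabilityMeasure (μ[|{ω | S ω = s}]) :=
      cond_isProbabilityMeasure (hμs_ne s hs)
    haveI : SigmaFinite ((μ[|{ω | S ω = s}]).trim hH) := inferInstance
    refine ae_eq_condExp_of_forall_setIntegral_eq hH (ind_integrable μ (hFmeas s g))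
      (fun H hHm hμH => ((hpgint s g).const_mul _).integrableOn)
      (fun H hHm hμH => ?_)
      (StronglyMeasurable.aestronglyMeasurable
        (((hpgmeas s g).const_mul _).stronglyMeasurable))
    have hHΩ : MeasurableSet[mΩ] H := hH _ hHm
    have hHB : MeasurableSet[mΩ] (H ∩ {ω' | G ω' = g}) := hHΩ.inter (hGset g)
    have e1 : ∫ x in H, ind ((fun ω => (S ω, G ω)) ⁻¹' {(s, g)}) x ∂μ
        = ∫ ω, ind {ω' | S ω' = s} ω * ind (H ∩ {ω' | G ω' = g}) ω ∂μ := by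
      rw [setIntegral_eq_ind_mul μ hHΩ]
      refine integral_congr_ae (Filter.Eventually.of_forall fun ω => ?_)
      show ind H ω * ind ((fun ω => (S ω, G ω)) ⁻¹' {(s, g)}) ω
          = ind {ω' | S ω' = s} ω * ind (H ∩ {ω' | G ω' = g}) ω
      rw [hFeq s g, ind_mul_eq_inter, ind_mul_eq_inter]
      congr 1
      ext ω'
      constructor
      · rintro ⟨h1, h2, h3⟩; exact ⟨h2, h1, h3⟩
      · rintro ⟨h1, h2, h3⟩; exact ⟨h2, h1, h3⟩
    have e2 : ∫ ω, ind (H ∩ {ω' | G ω' = g}) ω ∂(μ[|{ω | S ω = s}])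
        = (μ {ω | S ω = s}).toReal⁻¹
          * ∫ ω, ind {ω' | S ω' = s} ω * ind (H ∩ {ω' | G ω' = g}) ω ∂μ :=
      integral_cond_eq μ (hSset s) _
    have e3 : ∫ ω, ind (H ∩ {ω' | G ω' = g}) ω ∂(μ[|{ω | S ω = s}])
        = ∫ x in H, pg s g x ∂(μ[|{ω | S ω = s}]) := by
      rw [setIntegral_eq_ind_mul _ hHΩ]
      have : ∫ ω, ind (H ∩ {ω' | G ω' = g}) ω ∂(μ[|{ω | S ω = s}])
          = ∫ x in H, ind {ω | G ω = g} x ∂(μ[|{ω | S ω = s}]) := by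
        rw [setIntegral_eq_ind_mul _ hHΩ]
        refine integral_congr_ae (Filter.Eventually.of_forall fun ω => ?_)
        show ind (H ∩ {ω' | G ω' = g}) ω = ind H ω * ind {ω | G ω = g} ω
        rw [ind_mul_eq_inter]
      rw [this, hpg s g,
        ← setIntegral_condExp hH (ind_integrable _ (hGset g)) hHm,
        setIntegral_eq_ind_mul _ hHΩ, ← hpg s g]
    have e4 : ∫ ω, ind H ω * pg s g ω ∂(μ[|{ω | S ω = s}])
        = ∫ ω, ind H ω * pg s g ω ∂μ := by
      have hXm : Measurable[mH] (fun ω => ind H ω * pg s g ω) :=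
        (measurable_const.indicator hHm).mul (hpgmeas s g)
      have hXb : ∀ᵐ ω ∂μ, ‖ind H ω * pg s g ω‖ ≤ 1 := by
        filter_upwards [hpgnorm s g] with ω h
        rw [norm_mul]
        calc ‖ind H ω‖ * ‖pg s g ω‖ ≤ 1 * 1 :=
            mul_le_mul (norm_ind_le_one H ω) h (norm_nonneg _) zero_le_one
          _ = 1 := by norm_num
      exact integral_cond_of_mH_measurable μ hH hSmeas hSH s (hμs_ne s hs) hXm hXb
    have e5 : ∫ x in H, pg s g x ∂(μ[|{ω | S ω = s}]) = ∫ x in H, pg s g x ∂μ := by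
      rw [setIntegral_eq_ind_mul _ hHΩ, setIntegral_eq_ind_mul _ hHΩ]
      exact e4
    calc ∫ x in H, (μ {ω' | S ω' = s}).toReal * pg s g x ∂μ
        = (μ {ω' | S ω' = s}).toReal * ∫ x in H, pg s g x ∂μ := integral_const_mul _ _
      _ = (μ {ω' | S ω' = s}).toReal * ∫ ω, ind (H ∩ {ω' | G ω' = g}) ω ∂(μ[|{ω | S ω = s}]) := by
          rw [e3, e5]
      _ = (μ {ω' | S ω' = s}).toReal * ((μ {ω | S ω = s}).toReal⁻¹
          * ∫ ω, ind {ω' | S ω' = s} ω * ind (H ∩ {ω' | G ω' = g}) ω ∂μ) := by rw [e2]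
      _ = ∫ ω, ind {ω' | S ω' = s} ω * ind (H ∩ {ω' | G ω' = g}) ω ∂μ := by
          rw [← mul_assoc, mul_inv_cancel₀ (hc_ne s hs), one_mul]
      _ = ∫ x in H, ind ((fun ω => (S ω, G ω)) ⁻¹' {(s, g)}) x ∂μ := e1.symm
  -- key identity per (a, g, s)
  have keyags : ∀ s, (s = 1 ∨ s = 2) → ∀ a ≤ 1, ∀ g ≤ gmax,
      ∫ ω, ind {ω' | G ω' = g} ω * Ypo a g ω ∂(μ[|{ω | S ω = s}])
        = ∫ ω, Ypo a g ω * pg s g ω ∂μ := by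
    intro s hs a ha g hg
    rw [integral_cond_eq μ (hSset s)]
    have e1 : ∫ ω, ind {ω' | S ω' = s} ω * (ind {ω' | G ω' = g} ω * Ypo a g ω) ∂μ
        = ∫ ω, Ypo a g ω * ind ((fun ω => (S ω, G ω)) ⁻¹' {(s, g)}) ω ∂μ := by
      refine integral_congr_ae (Filter.Eventually.of_forall fun ω => ?_)
      rw [hFeq s g]
      calc ind {ω' | S ω' = s} ω * (ind {ω' | G ω' = g} ω * Ypo a g ω)
          = (ind {ω' | S ω' = s} ω * ind {ω' | G ω' = g} ω) * Ypo a g ω := by ring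
        _ = ind ({ω' | S ω' = s} ∩ {ω' | G ω' = g}) ω * Ypo a g ω := by
            rw [ind_mul_eq_inter]
        _ = Ypo a g ω * ind ({ω' | S ω' = s} ∩ {ω' | G ω' = g}) ω := by ring
    rw [e1, condIndep_integral_mul_ind μ hH (hYpomeas a ha g hg) hpairm
      (htrans a ha g hg) (measurableSet_singleton ((s, g) : ℕ × ℕ))]
    have e2 : ∫ ω, Ypo a g ω * (μ[ind ((fun ω => (S ω, G ω)) ⁻¹' {(s, g)}) | mH]) ω ∂μ
        = ∫ ω, Ypo a g ω * ((μ {ω' | S ω' = s}).toReal * pg s g ω) ∂μ := by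
      refine integral_congr_ae ?_
      filter_upwards [lemC s hs g] with ω hω
      rw [← hω]
    rw [e2]
    have e3 : ∫ ω, Ypo a g ω * ((μ {ω' | S ω' = s}).toReal * pg s g ω) ∂μ
        = (μ {ω' | S ω' = s}).toReal * ∫ ω, Ypo a g ω * pg s g ω ∂μ := by
      rw [← integral_const_mul]
      refine integral_congr_ae (Filter.Eventually.of_forall fun ω => ?_)
      ring
    rw [e3, ← mul_assoc, inv_mul_cancel₀ (hc_ne s hs), one_mul]
  -- assembling φ_s
  have hφ : ∀ s, (s = 1 ∨ s = 2) →
      ∫ ω, (Ya 1 ω - Ya 0 ω) ∂(μ[|{ω | S ω = s}])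
        = ∑ g ∈ Finset.range (gmax + 1),
          ((∫ ω, Ypo 1 g ω * pg s g ω ∂μ) - ∫ ω, Ypo 0 g ω * pg s g ω ∂μ) := by
    intro s hs
    have hintν : ∀ a ≤ 1, ∀ g ≤ gmax,
        Integrable (fun ω => ind {ω' | G ω' = g} ω * Ypo a g ω) (μ[|{ω | S ω = s}]) := by
      intro a ha g hg
      have h1 : Integrable (Ypo a g) (μ[|{ω | S ω = s}]) := by
        rw [ProbabilityTheory.cond]
        exact ((hint a ha g hg).restrict).smul_measure
          (ENNReal.inv_ne_top.mpr (hμs_ne s hs))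
      exact Integrable.bdd_mul h1 ((ind_stronglyMeasurable (hGset g)).aestronglyMeasurable)
        (Filter.Eventually.of_forall (norm_ind_le_one _))
    calc ∫ ω, (Ya 1 ω - Ya 0 ω) ∂(μ[|{ω | S ω = s}])
        = ∫ ω, ∑ g ∈ Finset.range (gmax + 1),
            (ind {ω' | G ω' = g} ω * Ypo 1 g ω - ind {ω' | G ω' = g} ω * Ypo 0 g ω)
            ∂(μ[|{ω | S ω = s}]) := by
          refine integral_congr_ae (Filter.Eventually.of_forall fun ω => ?_)
          show Ya 1 ω - Ya 0 ω = _
          rw [hYa 1 ω, hYa 0 ω, ← Finset.sum_sub_distrib]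
      _ = ∑ g ∈ Finset.range (gmax + 1), ∫ ω,
            (ind {ω' | G ω' = g} ω * Ypo 1 g ω - ind {ω' | G ω' = g} ω * Ypo 0 g ω)
            ∂(μ[|{ω | S ω = s}]) := by
          refine integral_finset_sum _ fun g hg => ?_
          have hg' : g ≤ gmax := Nat.lt_succ_iff.mp (Finset.mem_range.mp hg)
          exact (hintν 1 le_rfl g hg').sub (hintν 0 (by norm_num) g hg')
      _ = ∑ g ∈ Finset.range (gmax + 1),
            ((∫ ω, Ypo 1 g ω * pg s g ω ∂μ) - ∫ ω, Ypo 0 g ω * pg s g ω ∂μ) := by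
          refine Finset.sum_congr rfl fun g hg => ?_
          have hg' : g ≤ gmax := Nat.lt_succ_iff.mp (Finset.mem_range.mp hg)
          rw [integral_sub (hintν 1 le_rfl g hg') (hintν 0 (by norm_num) g hg'),
            keyags s hs 1 le_rfl g hg', keyags s hs 0 (by norm_num) g hg']
  -- zero mean of υ
  have hmean : ∀ g ≤ gmax, ∫ ω, pg 1 g ω ∂μ = ∫ ω, pg 2 g ω ∂μ := by
    intro g hg
    rw [hpgmean 1 (Or.inl rfl) g, hpgmean 2 (Or.inr rfl) g, hmarg g hg]
  -- final assembly
  rw [hφ 1 (Or.inl rfl), hφ 2 (Or.inr rfl), ← Finset.sum_sub_distrib]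
  refine Finset.sum_congr rfl fun g hg => ?_
  have hg' : g ≤ gmax := Nat.lt_succ_iff.mp (Finset.mem_range.mp hg)
  have h11 := hprod_int 1 le_rfl g hg' 1
  have h12 := hprod_int 1 le_rfl g hg' 2
  have h01 := hprod_int 0 (by norm_num) g hg' 1
  have h02 := hprod_int 0 (by norm_num) g hg' 2
  have hυ0 : ∫ ω, (pg 1 g ω - pg 2 g ω) ∂μ = 0 := by
    rw [integral_sub (hpgint 1 g) (hpgint 2 g), hmean g hg', sub_self]
  have hexp : ∫ ω, (Ypo 1 g ω - Ypo 0 g ω) * (pg 1 g ω - pg 2 g ω) ∂μ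
      = ((∫ ω, Ypo 1 g ω * pg 1 g ω ∂μ) - ∫ ω, Ypo 0 g ω * pg 1 g ω ∂μ)
        - ((∫ ω, Ypo 1 g ω * pg 2 g ω ∂μ) - ∫ ω, Ypo 0 g ω * pg 2 g ω ∂μ) := by
    have hfun : (fun ω => (Ypo 1 g ω - Ypo 0 g ω) * (pg 1 g ω - pg 2 g ω))
        = fun ω => (Ypo 1 g ω * pg 1 g ω - Ypo 0 g ω * pg 1 g ω)
          - (Ypo 1 g ω * pg 2 g ω - Ypo 0 g ω * pg 2 g ω) := by
      funext ω; ring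
    have hA1 : Integrable (fun ω => Ypo 1 g ω * pg 1 g ω - Ypo 0 g ω * pg 1 g ω) μ :=
      h11.sub h01
    have hA2 : Integrable (fun ω => Ypo 1 g ω * pg 2 g ω - Ypo 0 g ω * pg 2 g ω) μ :=
      h12.sub h02
    rw [hfun, integral_sub hA1 hA2, integral_sub h11 h01, integral_sub h12 h02]
  show _ = cov μ (fun ω => Ypo 1 g ω - Ypo 0 g ω) (fun ω => pg 1 g ω - pg 2 g ω)
  rw [cov, hυ0, mul_zero, sub_zero, hexp]
end

section
/- Second part of the Corollary to Theorem 2: if the neighborhood treatment is randomized in both populations, i.e. P(G=g|S=s,𝓗) = P(G=g|S=s) a.s. for s ∈ {1,2} and all g ∈ {0,…,g_max}, then φ₁ − φ₂ = Σ_{g=0}^{g_max} E[τ(g)] · ( P(G=g|S=1) − P(G=g|S=2) ). -/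
open MeasureTheory ProbabilityTheory Set

lemma integral_indicator_one' {Ω : Type*} [MeasurableSpace Ω] (μ : Measure Ω)
    [IsFiniteMeasure μ] {C : Set Ω} (hC : MeasurableSet C) :
    ∫ ω, C.indicator (fun _ => (1 : ℝ)) ω ∂μ = (μ C).toReal := by
  rw [integral_indicator_const (1 : ℝ) hC, smul_eq_mul, mul_one]; rfl

lemma integral_ind {Ω : Type*} [MeasurableSpace Ω] (μ : Measure Ω) [IsFiniteMeasure μ]
    {C : Set Ω} (hC : MeasurableSet C) : ∫ ω, ind C ω ∂μ = (μ C).toReal := by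
  simp only [ind]
  exact integral_indicator_one' μ hC

lemma setIntegral_ind {Ω : Type*} [MeasurableSpace Ω] (μ : Measure Ω) [IsFiniteMeasure μ]
    {C : Set Ω} (H : Set Ω) (hC : MeasurableSet C) :
    ∫ ω in H, ind C ω ∂μ = (μ (H ∩ C)).toReal := by
  rw [show (fun ω => ind C ω) = ind C from rfl, ind, setIntegral_indicator hC,
    setIntegral_const, smul_eq_mul, mul_one]; rfl

lemma integrable_ind {Ω : Type*} [MeasurableSpace Ω] (μ : Measure Ω) [IsFiniteMeasure μ]
    {C : Set Ω} (hC : MeasurableSet C) : Integrable (ind C) μ :=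
  (integrable_const 1).indicator hC

/-- **Corollary to Theorem 2, second part.**  If the neighborhood treatment is randomized in
both populations, i.e. `P(G=g|S=s,𝓗) = P(G=g|S=s)` a.s. for `s ∈ {1,2}` and all
`g ∈ {0,…,g_max}`, then `φ₁ − φ₂ = Σ_g E[τ(g)]·(P(G=g|S=1) − P(G=g|S=2))`. -/
theorem transport_bias_randomized_neighborhood_treatment
    {Ω : Type*} [mΩ : MeasurableSpace Ω] [StandardBorelSpace Ω] [Nonempty Ω]
    (μ : Measure Ω) [IsProbabilityMeasure μ]
    (gmax : ℕ)
    (S A G : Ω → ℕ)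
    (hS : ∀ ω, S ω = 1 ∨ S ω = 2) (hSmeas : Measurable S)
    (hSpos : ∀ s, (s = 1 ∨ s = 2) → 0 < μ {ω | S ω = s})
    (hA : ∀ ω, A ω ≤ 1) (hG : ∀ ω, G ω ≤ gmax)
    (hAmeas : Measurable A) (hGmeas : Measurable G)
    (Ypo : ℕ → ℕ → Ω → ℝ)
    (hYpomeas : ∀ a ≤ 1, ∀ g ≤ gmax, Measurable (Ypo a g))
    (hYposq : ∀ a ≤ 1, ∀ g ≤ gmax, MemLp (Ypo a g) 2 μ)
    (Ya : ℕ → Ω → ℝ)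
    (hYa : ∀ a ω, Ya a ω = ∑ g ∈ Finset.range (gmax + 1), ind {ω' | G ω' = g} ω * Ypo a g ω)
    (Y : Ω → ℝ)
    (hY : ∀ ω, Y ω = ind {ω' | A ω' = 1} ω * Ya 1 ω + ind {ω' | A ω' = 0} ω * Ya 0 ω)
    (mH : MeasurableSpace Ω) (hH : mH ≤ mΩ)
    (pg : ℕ → ℕ → Ω → ℝ)
    (hpg : ∀ s g, pg s g = (μ[|{ω | S ω = s}])[ind {ω | G ω = g} | mH])
    (hpgbdd : ∀ s g, ∀ᵐ ω ∂μ, 0 ≤ pg s g ω ∧ pg s g ω ≤ 1)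
    (hpgmeas : ∀ s g, Measurable[mH] (pg s g))
    (htrans : ∀ a ≤ 1, ∀ g ≤ gmax,
      CondIndepFun mH hH (Ypo a g) (fun ω => (S ω, G ω)) μ)
    (hSH : Indep (MeasurableSpace.comap S inferInstance) mH μ)
    (hrand : ∀ s, (s = 1 ∨ s = 2) → ∀ g ≤ gmax,
      ∀ᵐ ω ∂μ, pg s g ω = ((μ[|{ω' | S ω' = s}]) {ω' | G ω' = g}).toReal) :
    (∫ ω, (Ya 1 ω - Ya 0 ω) ∂(μ[|{ω | S ω = 1}]))
        - ∫ ω, (Ya 1 ω - Ya 0 ω) ∂(μ[|{ω | S ω = 2}])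
      = ∑ g ∈ Finset.range (gmax + 1),
          (∫ ω, (Ypo 1 g ω - Ypo 0 g ω) ∂μ)
            * (((μ[|{ω | S ω = 1}]) {ω | G ω = g}).toReal
                - ((μ[|{ω | S ω = 2}]) {ω | G ω = g}).toReal) := by
  classical
  letI : MeasurableSpace Ω := mΩ
  have hSset : ∀ s : ℕ, MeasurableSet[mΩ] {ω | S ω = s} :=
    fun s => hSmeas (measurableSet_singleton s)
  have hGset : ∀ g : ℕ, MeasurableSet[mΩ] {ω | G ω = g} :=
    fun g => hGmeas (measurableSet_singleton g)
  have main : ∀ s, s = 1 ∨ s = 2 →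
      ∫ ω, (Ya 1 ω - Ya 0 ω) ∂(μ[|{ω | S ω = s}])
        = ∑ g ∈ Finset.range (gmax + 1),
            (∫ ω, (Ypo 1 g ω - Ypo 0 g ω) ∂μ)
              * ((μ[|{ω | S ω = s}]) {ω | G ω = g}).toReal := by
    intro s hs
    set Ss : Set Ω := {ω | S ω = s} with hSsdef
    have hSsm : MeasurableSet[mΩ] Ss := hSset s
    have hps0 : μ Ss ≠ 0 := (hSpos s hs).ne'
    have hpsT : μ Ss ≠ ⊤ := measure_ne_top μ Ss
    haveI : IsProbabilityMeasure (μ[|Ss]) := cond_isProbabilityMeasure hps0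
    have hν_eq : μ[|Ss] = (μ Ss)⁻¹ • μ.restrict Ss := rfl
    -- the conditional measure agrees with μ on mH-measurable sets
    have hνH : ∀ H : Set Ω, MeasurableSet[mH] H → (μ[|Ss]) H = μ H := by
      intro H hHm
      have hind : μ (Ss ∩ H) = μ Ss * μ H :=
        ((Indep_iff _ _ _).mp hSH) Ss H ⟨{s}, measurableSet_singleton s, rfl⟩ hHm
      rw [cond_apply hSsm, hind, ← mul_assoc, ENNReal.inv_mul_cancel hps0 hpsT, one_mul]
    -- integrability of summands under the conditional measure
    have hint1 : ∀ a ≤ 1, ∀ g ≤ gmax,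
        Integrable (fun ω => ind {ω' | G ω' = g} ω * Ypo a g ω) (μ[|Ss]) := by
      intro a ha g hg
      have h1 : Integrable (fun ω => ind {ω' | G ω' = g} ω * Ypo a g ω) μ := by
        have h2 := ((hYposq a ha g hg).integrable one_le_two).indicator (hGset g)
        refine h2.congr (Filter.Eventually.of_forall fun ω => ?_)
        by_cases hω : ω ∈ {ω' | G ω' = g} <;>
          simp [ind, Set.indicator_apply, hω]
      rw [hν_eq]
      exact (h1.restrict).smul_measure (by simp [hps0])
    -- the key per-stratum identity
    have hkey : ∀ g, g ≤ gmax → ∀ a, a ≤ 1 →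
        ∫ ω, ind {ω' | G ω' = g} ω * Ypo a g ω ∂(μ[|Ss])
          = ((μ[|Ss]) {ω | G ω = g}).toReal * ∫ ω, Ypo a g ω ∂μ := by
      intro g hg
      set Gg : Set Ω := {ω | G ω = g} with hGgdef
      have hGm : MeasurableSet[mΩ] Gg := hGset g
      have hBm : MeasurableSet[mΩ] (Ss ∩ Gg) := hSsm.inter hGm
      set c : ℝ := ((μ[|Ss]) Gg).toReal with hcdef
      have hpgc : pg s g =ᵐ[μ[|Ss]] fun _ => c :=
        (hrand s hs g hg).filter_mono cond_absolutelyContinuous.ae_le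
      -- conditional probability of Gg given mH is constant under the conditional measure
      have hcond : ∀ H : Set Ω, MeasurableSet[mH] H →
          ((μ[|Ss]) (H ∩ Gg)).toReal = c * ((μ[|Ss]) H).toReal := by
        intro H hHm
        have hint : Integrable (ind Gg) (μ[|Ss]) := integrable_ind _ hGm
        have h1 : ∫ ω in H, ind Gg ω ∂(μ[|Ss]) = ((μ[|Ss]) (H ∩ Gg)).toReal :=
          setIntegral_ind _ H hGm
        have h2 : ∫ ω in H, ind Gg ω ∂(μ[|Ss]) = ∫ ω in H, pg s g ω ∂(μ[|Ss]) := by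
          conv_rhs => rw [hpg s g]
          exact (setIntegral_condExp hH hint hHm).symm
        have h3 : ∫ ω in H, pg s g ω ∂(μ[|Ss]) = ∫ _ω in H, c ∂(μ[|Ss]) :=
          setIntegral_congr_ae (hH H hHm) (hpgc.mono fun x hx _ => hx)
        have h4 : ∫ _ω in H, c ∂(μ[|Ss]) = ((μ[|Ss]) H).toReal * c := by
          rw [setIntegral_const, smul_eq_mul]; rfl
        rw [← h1, h2, h3, h4]; ring
      -- the atom Ss ∩ Gg has mH-conditional probability (μ (Ss ∩ Gg)) a.e.
      have hatom : ∀ H : Set Ω, MeasurableSet[mH] H →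
          (μ (H ∩ (Ss ∩ Gg))).toReal = (μ Ss).toReal * c * (μ H).toReal := by
        intro H hHm
        have h1 : μ (H ∩ (Ss ∩ Gg)) = μ Ss * (μ[|Ss]) (H ∩ Gg) := by
          rw [cond_apply hSsm, ← mul_assoc, ENNReal.mul_inv_cancel hps0 hpsT, one_mul,
            Set.inter_left_comm]
        rw [h1, ENNReal.toReal_mul, hcond H hHm, hνH H hHm]; ring
      have hr : (μ (Ss ∩ Gg)).toReal = (μ Ss).toReal * c := by
        have h := hatom univ MeasurableSet.univ
        simpa [measure_univ] using h
      have hBcond : (fun _ : Ω => (μ (Ss ∩ Gg)).toReal) =ᵐ[μ] μ⟦Ss ∩ Gg | mH⟧ := by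
        refine ae_eq_condExp_of_forall_setIntegral_eq hH ((integrable_const 1).indicator hBm)
          (fun H hHm hμH => (integrable_const _).integrableOn) (fun H hHm hμH => ?_)
          (StronglyMeasurable.aestronglyMeasurable stronglyMeasurable_const)
        have h5 : ∫ ω in H, (Ss ∩ Gg).indicator (fun _ => (1 : ℝ)) ω ∂μ
            = (μ (H ∩ (Ss ∩ Gg))).toReal := setIntegral_ind μ H hBm
        rw [setIntegral_const, smul_eq_mul, measureReal_def, h5, hatom H hHm, hr]; ring
      -- full independence of Ypo a g and the atom
      have hprod : ∀ a ≤ 1, ∀ u : Set ℝ, MeasurableSet u →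
          μ (Ypo a g ⁻¹' u ∩ (Ss ∩ Gg)) = μ (Ypo a g ⁻¹' u) * μ (Ss ∩ Gg) := by
        intro a ha u hu
        have hXm := hYpomeas a ha g hg
        have hSGm : Measurable[mΩ] fun ω => (S ω, G ω) := hSmeas.prodMk hGmeas
        have hpre : (fun ω => (S ω, G ω)) ⁻¹' {(s, g)} = Ss ∩ Gg := by
          ext ω
          simp [hSsdef, hGgdef, Prod.ext_iff]
        have hfac := (condIndepFun_iff_condExp_inter_preimage_eq_mul hXm hSGm).mp
          (htrans a ha g hg) u {(s, g)} hu (measurableSet_singleton _)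
        rw [hpre] at hfac
        have hXum : MeasurableSet[mΩ] (Ypo a g ⁻¹' u) := hXm hu
        have hIm : MeasurableSet[mΩ] (Ypo a g ⁻¹' u ∩ (Ss ∩ Gg)) := hXum.inter hBm
        have hL : ∫ ω, (μ⟦Ypo a g ⁻¹' u ∩ (Ss ∩ Gg) | mH⟧) ω ∂μ
            = (μ (Ypo a g ⁻¹' u ∩ (Ss ∩ Gg))).toReal := by
          rw [integral_condExp hH]
          exact integral_indicator_one' μ hIm
        have hR : ∫ ω, ((μ⟦Ypo a g ⁻¹' u | mH⟧) ω * (μ⟦Ss ∩ Gg | mH⟧) ω) ∂μ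
            = (μ (Ypo a g ⁻¹' u)).toReal * (μ (Ss ∩ Gg)).toReal := by
          have h1 : (fun ω => (μ⟦Ypo a g ⁻¹' u | mH⟧) ω * (μ⟦Ss ∩ Gg | mH⟧) ω)
              =ᵐ[μ] fun ω => (μ⟦Ypo a g ⁻¹' u | mH⟧) ω * (μ (Ss ∩ Gg)).toReal :=
            Filter.EventuallyEq.mul (Filter.EventuallyEq.refl _ _) hBcond.symm
          rw [integral_congr_ae h1, integral_mul_const, integral_condExp hH,
            integral_indicator_one' μ hXum]
        have h6 := integral_congr_ae hfac
        rw [hL, hR] at h6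
        rw [← ENNReal.toReal_eq_toReal_iff' (measure_ne_top _ _)
          (ENNReal.mul_ne_top (measure_ne_top _ _) (measure_ne_top _ _)), ENNReal.toReal_mul]
        exact h6
      -- full independence as IndepFun
      have hindep : ∀ a ≤ 1, IndepFun (Ypo a g) (ind (Ss ∩ Gg)) μ := by
        intro a ha
        rw [indepFun_iff_measure_inter_preimage_eq_mul]
        intro u t hu ht
        have hXum : MeasurableSet[mΩ] (Ypo a g ⁻¹' u) := hYpomeas a ha g hg hu
        by_cases h1 : (1 : ℝ) ∈ t <;> by_cases h0 : (0 : ℝ) ∈ t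
        · have hp : ind (Ss ∩ Gg) ⁻¹' t = univ := by
            ext ω; by_cases hω : ω ∈ Ss ∩ Gg <;> simp [ind, Set.indicator_apply, hω, h1, h0]
          simp [hp]
        · have hp : ind (Ss ∩ Gg) ⁻¹' t = Ss ∩ Gg := by
            ext ω; by_cases hω : ω ∈ Ss ∩ Gg <;> simp [ind, Set.indicator_apply, hω, h1, h0]
          rw [hp]; exact hprod a ha u hu
        · have hp : ind (Ss ∩ Gg) ⁻¹' t = (Ss ∩ Gg)ᶜ := by
            ext ω; by_cases hω : ω ∈ Ss ∩ Gg <;> simp [ind, Set.indicator_apply, hω, h1, h0]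
          rw [hp]
          have hsplit : μ (Ypo a g ⁻¹' u ∩ (Ss ∩ Gg)) + μ (Ypo a g ⁻¹' u ∩ (Ss ∩ Gg)ᶜ)
              = μ (Ypo a g ⁻¹' u) := by
            rw [← Set.diff_eq]
            exact measure_inter_add_diff _ hBm
          have e1 : (μ (Ypo a g ⁻¹' u ∩ (Ss ∩ Gg))).toReal
              + (μ (Ypo a g ⁻¹' u ∩ (Ss ∩ Gg)ᶜ)).toReal = (μ (Ypo a g ⁻¹' u)).toReal := by
            rw [← ENNReal.toReal_add (measure_ne_top _ _) (measure_ne_top _ _), hsplit]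
          have e2 : (μ (Ss ∩ Gg)).toReal + (μ (Ss ∩ Gg)ᶜ).toReal = 1 := by
            rw [← ENNReal.toReal_add (measure_ne_top _ _) (measure_ne_top _ _),
              measure_add_measure_compl hBm, measure_univ, ENNReal.toReal_one]
          have e3 : (μ (Ypo a g ⁻¹' u ∩ (Ss ∩ Gg))).toReal
              = (μ (Ypo a g ⁻¹' u)).toReal * (μ (Ss ∩ Gg)).toReal := by
            rw [hprod a ha u hu, ENNReal.toReal_mul]
          rw [← ENNReal.toReal_eq_toReal_iff' (measure_ne_top _ _)
            (ENNReal.mul_ne_top (measure_ne_top _ _) (measure_ne_top _ _)), ENNReal.toReal_mul]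
          linear_combination e1 - e3 - (μ (Ypo a g ⁻¹' u)).toReal * e2
        · have hp : ind (Ss ∩ Gg) ⁻¹' t = ∅ := by
            ext ω; by_cases hω : ω ∈ Ss ∩ Gg <;> simp [ind, Set.indicator_apply, hω, h1, h0]
          simp [hp]
      -- expected value of the product
      have hmul : ∀ a ≤ 1, ∫ ω, ind (Ss ∩ Gg) ω * Ypo a g ω ∂μ
          = (μ (Ss ∩ Gg)).toReal * ∫ ω, Ypo a g ω ∂μ := by
        intro a ha
        have hXint : Integrable (Ypo a g) μ := (hYposq a ha g hg).integrable one_le_two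
        have hBint : Integrable (ind (Ss ∩ Gg)) μ := integrable_ind μ hBm
        have h := IndepFun.integral_mul_eq_mul_integral ((hindep a ha).symm) hBint.aestronglyMeasurable hXint.aestronglyMeasurable
        calc ∫ ω, ind (Ss ∩ Gg) ω * Ypo a g ω ∂μ
            = ∫ ω, (ind (Ss ∩ Gg) * Ypo a g) ω ∂μ := rfl
          _ = (∫ ω, ind (Ss ∩ Gg) ω ∂μ) * ∫ ω, Ypo a g ω ∂μ := h
          _ = (μ (Ss ∩ Gg)).toReal * ∫ ω, Ypo a g ω ∂μ := by rw [integral_ind μ hBm]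
      -- conclusion of hkey
      intro a ha
      have hres : ∫ ω, ind Gg ω * Ypo a g ω ∂(μ.restrict Ss)
          = ∫ ω, ind (Ss ∩ Gg) ω * Ypo a g ω ∂μ := by
        rw [← integral_indicator hSsm]
        congr 1
        funext ω
        by_cases hSω : ω ∈ Ss <;> by_cases hGω : ω ∈ Gg <;>
          simp [ind, Set.indicator_apply, hSω, hGω]
      conv_lhs => rw [hν_eq]
      rw [integral_smul_measure, hres, hmul a ha, hr, smul_eq_mul, ENNReal.toReal_inv]
      have hne : (μ Ss).toReal ≠ 0 := ENNReal.toReal_ne_zero.mpr ⟨hps0, hpsT⟩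
      field_simp
    -- expand the integral of Ya 1 - Ya 0 into the sum
    have expand : ∫ ω, (Ya 1 ω - Ya 0 ω) ∂(μ[|Ss])
        = ∑ g ∈ Finset.range (gmax + 1),
            (∫ ω, ind {ω' | G ω' = g} ω * Ypo 1 g ω ∂(μ[|Ss])
              - ∫ ω, ind {ω' | G ω' = g} ω * Ypo 0 g ω ∂(μ[|Ss])) := by
      have hfun : (fun ω => Ya 1 ω - Ya 0 ω)
          = fun ω => ∑ g ∈ Finset.range (gmax + 1),
              (ind {ω' | G ω' = g} ω * Ypo 1 g ω - ind {ω' | G ω' = g} ω * Ypo 0 g ω) := by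
        funext ω
        rw [hYa, hYa, ← Finset.sum_sub_distrib]
      rw [hfun, integral_finset_sum]
      · refine Finset.sum_congr rfl fun g hg => ?_
        have hgle : g ≤ gmax := Nat.lt_succ_iff.mp (Finset.mem_range.mp hg)
        exact integral_sub (hint1 1 le_rfl g hgle) (hint1 0 (Nat.zero_le 1) g hgle)
      · intro g hg
        have hgle : g ≤ gmax := Nat.lt_succ_iff.mp (Finset.mem_range.mp hg)
        exact (hint1 1 le_rfl g hgle).sub (hint1 0 (Nat.zero_le 1) g hgle)
    rw [expand]
    refine Finset.sum_congr rfl fun g hg => ?_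
    have hgle : g ≤ gmax := Nat.lt_succ_iff.mp (Finset.mem_range.mp hg)
    have hi1 : Integrable (Ypo 1 g) μ := (hYposq 1 le_rfl g hgle).integrable one_le_two
    have hi0 : Integrable (Ypo 0 g) μ := (hYposq 0 (Nat.zero_le 1) g hgle).integrable one_le_two
    rw [hkey g hgle 1 le_rfl, hkey g hgle 0 (Nat.zero_le 1), integral_sub hi1 hi0]
    ring
  rw [main 1 (Or.inl rfl), main 2 (Or.inr rfl), ← Finset.sum_sub_distrib]
  exact Finset.sum_congr rfl fun g _ => by ring
end
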